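/- Fix c₁ > 0 and define a sequence by u_{k+1} = u_k + c₁ u_k / log(u_k), with u_0 > e. Then there exist constants 0 < a < A (depending on c₁ and u_0) such that for all sufficiently large k, a·exp(√(2c₁k)) ≤ u_k ≤ A·exp(√(2c₁k + C)) for some constant C; in particular log(u_k) ~ √(2c₁ k) as k → ∞. -/

import Mathlib

open Filter Real

set_option maxHeartbeats 1000000 in
/-- growth of the recursion `u_{k+1} = u_k + c₁ u_k / log u_k`
with `u_0 > e`: there are constants `0 < a < A` and `C ≥ 0` such that eventually
`a·exp(√(2c₁k)) ≤ u_k ≤ A·exp(√(2c₁k + C))`; in particular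
`log u_k ~ √(2c₁k)` as `k → ∞`. -/
theorem stmt16 (c₁ : ℝ) (hc₁ : 0 < c₁) (u : ℕ → ℝ) (hu0 : Real.exp 1 < u 0)
    (hrec : ∀ k : ℕ, u (k + 1) = u k + c₁ * u k / Real.log (u k)) :
    ∃ a A C : ℝ, 0 < a ∧ a < A ∧ 0 ≤ C ∧
      (∀ᶠ k : ℕ in atTop,
        a * Real.exp (Real.sqrt (2 * c₁ * k)) ≤ u k ∧
        u k ≤ A * Real.exp (Real.sqrt (2 * c₁ * k + C))) ∧
      Tendsto (fun k : ℕ => Real.log (u k) / Real.sqrt (2 * c₁ * k)) atTop (nhds 1) := by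
  -- positivity / basic facts
  have hupos : ∀ k, Real.exp 1 < u k := by
    intro k
    induction k with
    | zero => exact hu0
    | succ k ih =>
      have h0 : 0 < u k := lt_trans (Real.exp_pos 1) ih
      have hlog : 1 < Real.log (u k) := (Real.lt_log_iff_exp_lt h0).2 ih
      have hlog0 : 0 < Real.log (u k) := lt_trans one_pos hlog
      have hpos : 0 < c₁ * u k / Real.log (u k) := by positivity
      rw [hrec k]; linarith
  set L : ℕ → ℝ := fun k => Real.log (u k) with hLdef
  have hu_pos : ∀ k, 0 < u k := fun k => lt_trans (Real.exp_pos 1) (hupos k)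
  have hL1 : ∀ k, 1 < L k := fun k =>
    (Real.lt_log_iff_exp_lt (hu_pos k)).2 (hupos k)
  have hLpos : ∀ k, 0 < L k := fun k => lt_trans one_pos (hL1 k)
  have h1t : ∀ k, (0:ℝ) < 1 + c₁ / L k := fun k =>
    add_pos one_pos (div_pos hc₁ (hLpos k))
  have hLrec : ∀ k, L (k + 1) = L k + Real.log (1 + c₁ / L k) := by
    intro k
    have hform : u (k + 1) = u k * (1 + c₁ / L k) := by
      rw [hrec k]; field_simp [hLdef]; ring
    show Real.log (u (k+1)) = Real.log (u k) + Real.log (1 + c₁ / L k)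
    rw [hform, Real.log_mul (hu_pos k).ne' (h1t k).ne']
  -- log(1+x) bounds
  have hlog_le : ∀ x : ℝ, 0 < x → Real.log (1 + x) ≤ x := by
    intro x hx
    have := Real.log_le_sub_one_of_pos (show (0:ℝ) < 1 + x by linarith)
    linarith
  have hlog_ge : ∀ x : ℝ, 0 < x → x / (1 + x) ≤ Real.log (1 + x) := by
    intro x hx
    have h1x : (0:ℝ) < 1 + x := by linarith
    have := Real.log_le_sub_one_of_pos (inv_pos.2 h1x)
    rw [Real.log_inv] at this
    have h2 : 1 - (1 + x)⁻¹ ≤ Real.log (1 + x) := by linarith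
    have h3 : x / (1 + x) = 1 - (1 + x)⁻¹ := by field_simp; ring
    linarith [h2, h3.le]
  -- monotonicity of L
  have hmono : Monotone L := by
    apply monotone_nat_of_le_succ
    intro k
    have : 0 ≤ Real.log (1 + c₁ / L k) :=
      Real.log_nonneg (by nlinarith [div_pos hc₁ (hLpos k)])
    rw [hLrec k]; linarith
  -- lower bound: 2 c₁ k ≤ (L k + c₁)^2
  have lower_sq : ∀ k : ℕ, 2 * c₁ * k ≤ (L k + c₁) ^ 2 := by
    intro k
    induction k with
    | zero =>
      norm_num
      positivity
    | succ k ih =>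
      have hM : 0 < L k + c₁ := by linarith [hLpos k]
      have hstep : L k + c₁ / (L k + c₁) ≤ L (k + 1) := by
        have h1 : c₁ / L k / (1 + c₁ / L k) ≤ Real.log (1 + c₁ / L k) :=
          hlog_ge _ (div_pos hc₁ (hLpos k))
        have h2 : c₁ / L k / (1 + c₁ / L k) = c₁ / (L k + c₁) := by
          have hx : L k ≠ 0 := (hLpos k).ne'
          rw [div_div]
          congr 1
          field_simp
        rw [hLrec k]; rw [h2] at h1; linarith
      have hsq : (L k + c₁ + c₁ / (L k + c₁)) ^ 2 ≤ (L (k + 1) + c₁) ^ 2 := by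
        apply pow_le_pow_left₀ (by positivity)
        linarith
      have hid : c₁ / (L k + c₁) * (L k + c₁) = c₁ := div_mul_cancel₀ _ hM.ne'
      have hexp : (L k + c₁) ^ 2 + 2 * c₁ ≤ (L k + c₁ + c₁ / (L k + c₁)) ^ 2 := by
        nlinarith [sq_nonneg (c₁ / (L k + c₁))]
      push_cast
      nlinarith
  have hLlow : ∀ k : ℕ, Real.sqrt (2 * c₁ * k) - c₁ ≤ L k := by
    intro k
    have h1 : Real.sqrt (2 * c₁ * k) ≤ Real.sqrt ((L k + c₁) ^ 2) :=
      Real.sqrt_le_sqrt (lower_sq k)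
    rw [Real.sqrt_sq (by linarith [hLpos k])] at h1
    linarith
  -- choose N with c₁/2 ≤ L N
  obtain ⟨N, hN⟩ := exists_nat_ge ((3 * c₁ / 2) ^ 2 / (2 * c₁))
  have hsqN : 3 * c₁ / 2 ≤ Real.sqrt (2 * c₁ * N) := by
    rw [Real.le_sqrt (by positivity) (by nlinarith [(Nat.cast_nonneg N : (0:ℝ) ≤ N)])]
    rw [div_le_iff₀ (by positivity)] at hN
    linarith
  have hLN : c₁ / 2 ≤ L N := by
    have := hLlow N; linarith
  have hLc : ∀ k, N ≤ k → c₁ / 2 ≤ L k := fun k hk => le_trans hLN (hmono hk)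
  set C : ℝ := (L N - c₁ / 2) ^ 2 with hCdef
  have hC0 : 0 ≤ C := sq_nonneg _
  -- upper bound by induction from N
  have upper_sq : ∀ j : ℕ, (L (N + j) - c₁ / 2) ^ 2 ≤ 2 * c₁ * j + C := by
    intro j
    induction j with
    | zero => rw [hCdef]; norm_num
    | succ j ih =>
      have hx1 : 1 < L (N + j) := hL1 _
      have hx0 : 0 < L (N + j) := hLpos _
      have hxc : c₁ / 2 ≤ L (N + j) := hLc _ (Nat.le_add_right N j)
      have hupK : L (N + j + 1) ≤ L (N + j) + c₁ / L (N + j) := by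
        rw [hLrec (N + j)]
        have := hlog_le (c₁ / L (N + j)) (div_pos hc₁ hx0)
        linarith
      have hxc' : c₁ / 2 ≤ L (N + j + 1) := hLc _ (by omega)
      have hsq : (L (N + j + 1) - c₁ / 2) ^ 2
          ≤ (L (N + j) + c₁ / L (N + j) - c₁ / 2) ^ 2 := by
        apply pow_le_pow_left₀ (by linarith)
        linarith
      have hid : c₁ / L (N + j) * L (N + j) = c₁ := div_mul_cancel₀ _ hx0.ne'
      have ht0 : 0 < c₁ / L (N + j) := div_pos hc₁ hx0
      have hkey : (L (N + j) + c₁ / L (N + j) - c₁ / 2) ^ 2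
          ≤ (L (N + j) - c₁ / 2) ^ 2 + 2 * c₁ := by
        nlinarith [mul_le_mul_of_nonneg_left hx1.le ht0.le, sq_nonneg (c₁ / L (N + j))]
      have key : (L (N + j + 1) - c₁ / 2) ^ 2 ≤ 2 * c₁ * ((j:ℝ) + 1) + C := by
        nlinarith
      push_cast
      exact key
  have hLup : ∀ k, N ≤ k → L k ≤ c₁ / 2 + Real.sqrt (2 * c₁ * k + C) := by
    intro k hk
    obtain ⟨j, rfl⟩ := Nat.exists_eq_add_of_le hk
    have h1 := upper_sq j
    have h2 : 2 * c₁ * (j : ℝ) + C ≤ 2 * c₁ * ((N + j : ℕ) : ℝ) + C := by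
      push_cast
      nlinarith [(Nat.cast_nonneg N : (0:ℝ) ≤ N)]
    have h3 : L (N + j) - c₁ / 2 ≤ Real.sqrt (2 * c₁ * ((N + j : ℕ) : ℝ) + C) := by
      rw [Real.le_sqrt (by linarith [hLc (N + j) (Nat.le_add_right N j)])
        (by nlinarith [(Nat.cast_nonneg (N + j) : (0:ℝ) ≤ ((N + j : ℕ) : ℝ)), hC0])]
      linarith
    linarith
  -- the constants
  refine ⟨Real.exp (-c₁), Real.exp (c₁ / 2), C, Real.exp_pos _,
    Real.exp_lt_exp.2 (by linarith), hC0, ?_, ?_⟩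
  · filter_upwards [eventually_ge_atTop N] with k hk
    constructor
    · have h1 : Real.sqrt (2 * c₁ * k) - c₁ ≤ L k := hLlow k
      calc Real.exp (-c₁) * Real.exp (Real.sqrt (2 * c₁ * k))
          = Real.exp (Real.sqrt (2 * c₁ * k) - c₁) := by
            rw [← Real.exp_add]; ring_nf
        _ ≤ Real.exp (L k) := Real.exp_le_exp.2 (by linarith)
        _ = u k := Real.exp_log (hu_pos k)
    · have h1 := hLup k hk
      calc u k = Real.exp (L k) := (Real.exp_log (hu_pos k)).symm
        _ ≤ Real.exp (c₁ / 2 + Real.sqrt (2 * c₁ * k + C)) :=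
            Real.exp_le_exp.2 (by linarith)
        _ = Real.exp (c₁ / 2) * Real.exp (Real.sqrt (2 * c₁ * k + C)) :=
            Real.exp_add _ _
  -- the tendsto part
  · have hs : Tendsto (fun k : ℕ => Real.sqrt (2 * c₁ * k)) atTop atTop := by
      have hsqrt : Tendsto Real.sqrt atTop atTop := by
        rw [tendsto_atTop]
        intro b
        filter_upwards [eventually_ge_atTop (b ^ 2)] with x h1
        calc b ≤ |b| := le_abs_self b
          _ = Real.sqrt (b ^ 2) := (Real.sqrt_sq_eq_abs b).symm
          _ ≤ Real.sqrt x := Real.sqrt_le_sqrt h1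
      have h2 : Tendsto (fun k : ℕ => 2 * c₁ * (k : ℝ)) atTop atTop :=
        Tendsto.const_mul_atTop (by linarith) tendsto_natCast_atTop_atTop
      exact hsqrt.comp h2
    set D : ℝ := c₁ + c₁ / 2 + Real.sqrt C with hDdef
    have hD0 : 0 ≤ D := by positivity
    have hbound : ∀ᶠ k : ℕ in atTop,
        ‖L k / Real.sqrt (2 * c₁ * k) - 1‖ ≤ D / Real.sqrt (2 * c₁ * k) := by
      filter_upwards [eventually_ge_atTop N, eventually_ge_atTop 1] with k hk hk1
      have hkpos : (0:ℝ) < 2 * c₁ * k := by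
        have : (1:ℝ) ≤ (k:ℝ) := by exact_mod_cast hk1
        nlinarith
      have hspos : 0 < Real.sqrt (2 * c₁ * k) := Real.sqrt_pos.2 hkpos
      have hsplit : Real.sqrt (2 * c₁ * k + C)
          ≤ Real.sqrt (2 * c₁ * k) + Real.sqrt C := by
        have h2 : 2 * c₁ * (k:ℝ) + C ≤ (Real.sqrt (2 * c₁ * k) + Real.sqrt C) ^ 2 := by
          nlinarith [Real.sq_sqrt hkpos.le, Real.sq_sqrt hC0,
            mul_nonneg (Real.sqrt_nonneg (2 * c₁ * k)) (Real.sqrt_nonneg C)]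
        have := Real.sqrt_le_sqrt h2
        rwa [Real.sqrt_sq (by positivity)] at this
      have hlow := hLlow k
      have hup := hLup k hk
      have habs : |L k - Real.sqrt (2 * c₁ * k)| ≤ D := by
        rw [abs_le]
        constructor
        · have : 0 ≤ c₁ / 2 + Real.sqrt C := by positivity
          simp only [hDdef]; linarith
        · simp only [hDdef]; linarith
      have heq : L k / Real.sqrt (2 * c₁ * k) - 1
          = (L k - Real.sqrt (2 * c₁ * k)) / Real.sqrt (2 * c₁ * k) := by
        field_simp
      rw [heq, Real.norm_eq_abs, abs_div, abs_of_pos hspos]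
      gcongr
    have hg0 : Tendsto (fun k : ℕ => D / Real.sqrt (2 * c₁ * k)) atTop (nhds 0) :=
      tendsto_const_nhds.div_atTop hs
    have hmain : Tendsto (fun k : ℕ => L k / Real.sqrt (2 * c₁ * k) - 1) atTop (nhds 0) :=
      squeeze_zero_norm' hbound hg0
    have hfin := hmain.add (tendsto_const_nhds :
      Tendsto (fun _ : ℕ => (1:ℝ)) atTop (nhds 1))
    simpa using hfin
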